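/- Let n ≥ 1 and, for each l ∈ {1,…,n}, let p_l and q_l be integers with q_l ≥ 1 and gcd(p_l, q_l) = 1, and let q = lcm(q_1,…,q_n). If q ≥ 3, then there exist nonnegative real numbers r_1,…,r_n and an integer j with 1 ≤ j ≤ q−1 such that: (a) for every integer k with 1 ≤ k ≤ q−1, k ≠ j and k ≠ q−j, one has ∑_{l=1}^n r_l cos(2π j p_l/q_l) > ∑_{l=1}^n r_l cos(2π k p_l/q_l); and (b) ∑_{l=1}^n r_l sin(2π j p_l/q_l) ≠ 0. -/

import Mathlib

set_option maxHeartbeats 1000000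

open Real


lemma cos_mono_aux (Q c : ℕ) (hc1 : 1 ≤ c) (h2c : 2*c ≤ Q) :
    Real.cos (2*π*c/Q) ≤ Real.cos (2*π/Q) := by
  have hQ0 : (0:ℝ) < Q := by
    have : 0 < Q := by omega
    exact_mod_cast this
  have hπQ := mul_pos pi_pos hQ0
  apply Real.cos_le_cos_of_nonneg_of_le_pi
  · positivity
  · rw [div_le_iff₀ hQ0]
    have hc : (2*(c:ℝ) ≤ Q) := by exact_mod_cast h2c
    nlinarith [pi_pos]
  · have hc : (1:ℝ) ≤ c := by exact_mod_cast hc1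
    rw [div_le_div_iff₀ hQ0 hQ0]
    nlinarith [pi_pos]

lemma cos_strict_aux (Q c : ℕ) (hc1 : 2 ≤ c) (h2c : 2*c ≤ Q) :
    Real.cos (2*π*c/Q) < Real.cos (2*π/Q) := by
  have hQ0 : (0:ℝ) < Q := by
    have : 0 < Q := by omega
    exact_mod_cast this
  have hπQ := mul_pos pi_pos hQ0
  apply Real.cos_lt_cos_of_nonneg_of_le_pi
  · positivity
  · rw [div_le_iff₀ hQ0]
    have hc : (2*(c:ℝ) ≤ Q) := by exact_mod_cast h2c
    nlinarith [pi_pos]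
  · have hc : (2:ℝ) ≤ c := by exact_mod_cast hc1
    rw [div_lt_div_iff₀ hQ0 hQ0]
    nlinarith [pi_pos, hπQ]

lemma cos_reflect (Q c : ℕ) (hcQ : c ≤ Q) (hQ0 : 0 < Q) :
    Real.cos (2*π*c/Q) = Real.cos (2*π*(Q-c : ℕ)/Q) := by
  have hQ0' : (0:ℝ) < Q := by exact_mod_cast hQ0
  have h : (((Q - c : ℕ)) : ℝ) = (Q:ℝ) - c := by
    push_cast [hcQ]; ring
  rw [h, ← Real.cos_two_pi_sub (2*π*c/Q)]
  congr 1
  field_simp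

lemma cos_angle_le (Q c : ℕ) (hc1 : 1 ≤ c) (hc2 : c + 1 ≤ Q) :
    Real.cos (2*π*c/Q) ≤ Real.cos (2*π/Q) := by
  rcases le_or_gt (2*c) Q with h | h
  · exact cos_mono_aux Q c hc1 h
  · rw [cos_reflect Q c (by omega) (by omega)]
    exact cos_mono_aux Q (Q - c) (by omega) (by omega)

lemma cos_angle_lt (Q c : ℕ) (hc1 : 2 ≤ c) (hc2 : c + 2 ≤ Q) :
    Real.cos (2*π*c/Q) < Real.cos (2*π/Q) := by
  rcases le_or_gt (2*c) Q with h | h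
  · exact cos_strict_aux Q c hc1 h
  · rw [cos_reflect Q c (by omega) (by omega)]
    exact cos_strict_aux Q (Q - c) (by omega) (by omega)

lemma cos_congr_mod (Q : ℕ) (hQ : Q ≠ 0) (a b : ℤ) (h : (Q:ℤ) ∣ a - b) :
    Real.cos (2*π*a/Q) = Real.cos (2*π*b/Q) := by
  obtain ⟨m, hm⟩ := h
  have hQ' : (Q:ℝ) ≠ 0 := Nat.cast_ne_zero.mpr hQ
  have ha : (a:ℝ) = b + m * Q := by
    have : (a:ℝ) - b = Q * m := by exact_mod_cast congrArg (Int.cast : ℤ → ℝ) hm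
    linarith
  have : 2*π*(a:ℝ)/Q = 2*π*b/Q + m * (2*π) := by
    rw [ha]; field_simp
  rw [this, Real.cos_add_int_mul_two_pi]

lemma sin_congr_mod (Q : ℕ) (hQ : Q ≠ 0) (a b : ℤ) (h : (Q:ℤ) ∣ a - b) :
    Real.sin (2*π*a/Q) = Real.sin (2*π*b/Q) := by
  obtain ⟨m, hm⟩ := h
  have hQ' : (Q:ℝ) ≠ 0 := Nat.cast_ne_zero.mpr hQ
  have ha : (a:ℝ) = b + m * Q := by
    have : (a:ℝ) - b = Q * m := by exact_mod_cast congrArg (Int.cast : ℤ → ℝ) hm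
    linarith
  have : 2*π*(a:ℝ)/Q = 2*π*b/Q + m * (2*π) := by
    rw [ha]; field_simp
  rw [this, Real.sin_add_int_mul_two_pi]

lemma base_case (Q : ℕ) (hQ3 : 3 ≤ Q) (n : ℕ) (p : Fin n → ℤ) (q : Fin n → ℕ)
    (hq : ∀ l, 1 ≤ q l) (hcop : ∀ l, Int.gcd (p l) (q l) = 1)
    (lst : Fin n) (hlQ : q lst = Q) :
    ∃ (r : Fin n → ℝ) (j : ℕ),
      (∀ l, 0 ≤ r l) ∧ 1 ≤ j ∧ j ≤ Q - 1 ∧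
      (∀ k : ℕ, 1 ≤ k → k ≤ Q - 1 → k ≠ j → k ≠ Q - j →
        ∑ l, r l * Real.cos (2 * π * k * p l / q l) <
          ∑ l, r l * Real.cos (2 * π * j * p l / q l)) ∧
      ∑ l, r l * Real.sin (2 * π * j * p l / q l) ≠ 0 := by
  haveI : NeZero Q := ⟨by omega⟩
  haveI : Fact (1 < Q) := ⟨by omega⟩
  set P : ℤ := p lst with hP
  have hcopP : Int.gcd P Q = 1 := by rw [hP, ← hlQ]; exact hcop lst
  have hco : IsCoprime P (Q:ℤ) := Int.isCoprime_iff_gcd_eq_one.mpr hcopP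
  obtain ⟨u, v, huv⟩ := hco
  -- in ZMod Q : u * P = 1
  have hzm : (u : ZMod Q) * (P : ZMod Q) = 1 := by
    have := congrArg (fun z : ℤ => (z : ZMod Q)) huv
    push_cast at this
    simpa [ZMod.natCast_self] using this
  set j : ℕ := (u : ZMod Q).val with hj
  have hjQ : j < Q := ZMod.val_lt _
  have hjcast : ((j : ℕ) : ZMod Q) = (u : ZMod Q) := by
    rw [hj]; simp [ZMod.natCast_val, ZMod.cast_id]
  have hj1 : 1 ≤ j := by
    rcases Nat.eq_zero_or_pos j with h0 | h1
    · exfalso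
      rw [h0] at hjcast
      rw [← hjcast] at hzm
      simpa using hzm
    · exact h1
  -- j * P ≡ 1 mod Q
  have hjP : ((Q:ℤ)) ∣ ((j:ℤ) * P - 1) := by
    rw [← ZMod.intCast_zmod_eq_zero_iff_dvd]
    push_cast
    rw [hjcast, hzm]
    ring
  refine ⟨fun l => if l = lst then 1 else 0, j, fun l => by positivity, hj1, by omega, ?_, ?_⟩
  · intro k hk1 hk2 hkj hkQj
    have collapse : ∀ g : Fin n → ℝ,
        ∑ l, (if l = lst then (1:ℝ) else 0) * g l = g lst := by
      intro g; simp [ite_mul]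
    rw [collapse, collapse]
    -- angle at j
    have hQR : (q lst : ℝ) = (Q:ℝ) := by rw [hlQ]
    have hangle : ∀ (m : ℕ), 2 * π * (m:ℝ) * (P:ℝ) / (q lst : ℝ) = 2*π*(((m:ℤ)*P : ℤ):ℝ)/(Q:ℝ) := by
      intro m; rw [hQR]; push_cast; ring
    have hj_is : Real.cos (2 * π * (j:ℝ) * (P:ℝ) / (q lst:ℝ)) = Real.cos (2*π/Q) := by
      rw [hangle j, cos_congr_mod Q (by omega) _ 1 (by simpa using hjP)]
      norm_num
    -- angle at k
    set kz : ZMod Q := (k : ZMod Q) * (P : ZMod Q) with hkz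
    set c : ℕ := kz.val with hc
    have hcQ : c < Q := ZMod.val_lt _
    have hccast : ((c:ℕ) : ZMod Q) = kz := by
      rw [hc]; simp [ZMod.natCast_val, ZMod.cast_id]
    have hkP : ((Q:ℤ)) ∣ ((k:ℤ) * P - (c:ℤ)) := by
      rw [← ZMod.intCast_zmod_eq_zero_iff_dvd]
      push_cast
      rw [hccast, hkz]
      ring
    have hk_is : Real.cos (2 * π * (k:ℝ) * (P:ℝ) / (q lst:ℝ)) = Real.cos (2*π*(c:ℝ)/Q) := by
      rw [hangle k, cos_congr_mod Q (by omega) _ (c:ℤ) (by simpa using hkP)]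
      norm_cast
    -- c ≠ 0
    have hkz_of : (k : ZMod Q) = kz * (u : ZMod Q) := by
      rw [hkz]
      calc (k : ZMod Q) = (k : ZMod Q) * ((u : ZMod Q) * (P : ZMod Q)) := by rw [hzm]; ring
      _ = (k : ZMod Q) * (P : ZMod Q) * (u : ZMod Q) := by ring
    have hc0 : c ≠ 0 := by
      intro h0
      have : kz = 0 := by rw [← hccast, h0]; simp
      rw [this, zero_mul] at hkz_of
      have : (Q:ℕ) ∣ k := (ZMod.natCast_eq_zero_iff k Q).mp hkz_of
      have := Nat.le_of_dvd (by omega) this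
      omega
    have hc1 : c ≠ 1 := by
      intro h1
      have : kz = 1 := by rw [← hccast, h1]; norm_num
      rw [this, one_mul, ← hjcast] at hkz_of
      have : k ≡ j [MOD Q] := (ZMod.natCast_eq_natCast_iff _ _ _).mp hkz_of
      have := this.eq_of_lt_of_lt (by omega) hjQ
      exact hkj this
    have hcQ1 : c ≠ Q - 1 := by
      intro h1
      have hQ1 : ((Q - 1 : ℕ) : ZMod Q) = -1 := by
        have : ((Q - 1 : ℕ) : ZMod Q) = ((Q:ℕ) : ZMod Q) - 1 := by
          rw [Nat.cast_sub (by omega)]; norm_num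
        rw [this, ZMod.natCast_self]; ring
      have hkzm : kz = -1 := by rw [← hccast, h1, hQ1]
      rw [hkzm, ← hjcast] at hkz_of
      have hQj : ((Q - j : ℕ) : ZMod Q) = -(j : ZMod Q) := by
        rw [Nat.cast_sub (by omega), ZMod.natCast_self]; ring
      rw [show (-1 : ZMod Q) * (j : ZMod Q) = -(j:ZMod Q) by ring, ← hQj] at hkz_of
      have : k ≡ Q - j [MOD Q] := (ZMod.natCast_eq_natCast_iff _ _ _).mp hkz_of
      have := this.eq_of_lt_of_lt (by omega) (by omega)
      exact hkQj this
    rw [hj_is, hk_is]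
    exact cos_angle_lt Q c (by omega) (by omega)
  · have collapse : ∀ g : Fin n → ℝ,
        ∑ l, (if l = lst then (1:ℝ) else 0) * g l = g lst := by
      intro g; simp [ite_mul]
    rw [collapse]
    have hQR : (q lst : ℝ) = (Q:ℝ) := by rw [hlQ]
    have hangle : 2 * π * (j:ℝ) * (P:ℝ) / (q lst : ℝ) = 2*π*(((j:ℤ)*P : ℤ):ℝ)/(Q:ℝ) := by
      rw [hQR]; push_cast; ring
    have hs : Real.sin (2 * π * (j:ℝ) * (P:ℝ) / (q lst:ℝ)) = Real.sin (2*π/Q) := by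
      rw [hangle, sin_congr_mod Q (by omega) _ 1 (by simpa using hjP)]
      norm_num
    rw [hs]
    have hQ0 : (0:ℝ) < Q := by positivity
    have : 0 < Real.sin (2*π/Q) := by
      apply Real.sin_pos_of_pos_of_lt_pi
      · positivity
      · rw [div_lt_iff₀ hQ0]
        have : (3:ℝ) ≤ Q := by exact_mod_cast hQ3
        nlinarith [pi_pos]
    exact ne_of_gt this

def Goal (Q : ℕ) (n : ℕ) (p : Fin n → ℤ) (q : Fin n → ℕ) : Prop :=
    ∃ (r : Fin n → ℝ) (j : ℕ),
      (∀ l, 0 ≤ r l) ∧ 1 ≤ j ∧ j ≤ Q - 1 ∧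
      (∀ k : ℕ, 1 ≤ k → k ≤ Q - 1 → k ≠ j → k ≠ Q - j →
        ∑ l, r l * Real.cos (2 * π * k * p l / q l) <
          ∑ l, r l * Real.cos (2 * π * j * p l / q l)) ∧
      ∑ l, r l * Real.sin (2 * π * j * p l / q l) ≠ 0

lemma base_case' (Q : ℕ) (hQ3 : 3 ≤ Q) (n : ℕ) (p : Fin n → ℤ) (q : Fin n → ℕ)
    (hq : ∀ l, 1 ≤ q l) (hcop : ∀ l, Int.gcd (p l) (q l) = 1)
    (lst : Fin n) (hlQ : q lst = Q) : Goal Q n p q :=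
  base_case Q hQ3 n p q hq hcop lst hlQ

lemma main : ∀ Q : ℕ, 3 ≤ Q → ∀ (n : ℕ) (p : Fin n → ℤ) (q : Fin n → ℕ),
    (∀ l, 1 ≤ q l) → (∀ l, Int.gcd (p l) (q l) = 1) → Q = Finset.univ.lcm q →
    Goal Q n p q := by
  intro Q
  induction Q using Nat.strong_induction_on with
  | _ Q IH =>
  intro hQ3 n p q hq hcop hQ
  by_cases hex : ∃ l, q l = Q
  · obtain ⟨lst, hlst⟩ := hex
    exact base_case' Q hQ3 n p q hq hcop lst hlst
  · push_neg at hex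
    have hqdvd : ∀ l, q l ∣ Q := fun l => hQ ▸ Finset.dvd_lcm (Finset.mem_univ l)
    -- select a coordinate with 2 ≤ q l and 3 * q l ≤ Q
    have hsel : ∃ l, 2 ≤ q l ∧ 3 * q l ≤ Q := by
      by_contra hno
      push_neg at hno
      have hall : ∀ l, q l ∣ Q / 2 := by
        intro l
        rcases eq_or_lt_of_le (hq l) with h1 | h2
        · rw [← h1]; exact one_dvd _
        · have h3 := hno l h2
          obtain ⟨m, hm⟩ := hqdvd l
          have hm2 : m = 2 := by
            rcases m with _ | _ | _ | m
            · omega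
            · have := hex l; omega
            · rfl
            · exfalso; nlinarith [hq l]
          subst hm2
          have : Q / 2 = q l := by omega
          rw [this]
      have hd2 : Q ∣ Q / 2 := by
        have h := Finset.lcm_dvd (s := (Finset.univ : Finset (Fin n))) (fun l _ => hall l)
        rwa [← hQ] at h
      have := Nat.le_of_dvd (by omega) hd2
      omega
    obtain ⟨lst, hl2, hl3⟩ := hsel
    set qs : ℕ := q lst with hqs_def
    set ps : ℤ := p lst with hps_def
    have hqs_pos : 0 < qs := by omega
    have hqs_dvd : qs ∣ Q := hqdvd lst
    set Q' : ℕ := Q / qs with hQ'_def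
    have hQfact : Q = Q' * qs := (Nat.div_mul_cancel hqs_dvd).symm
    set g : Fin n → ℕ := fun l => Nat.gcd (q l) qs with hg_def
    have hg_pos : ∀ l, 0 < g l := fun l => Nat.gcd_pos_of_pos_left qs (hq l)
    have hgl : ∀ l, g l ∣ q l := fun l => Nat.gcd_dvd_left _ _
    have hgs : ∀ l, g l ∣ qs := fun l => Nat.gcd_dvd_right _ _
    set q' : Fin n → ℕ := fun l => q l / g l with hq'_def
    set p' : Fin n → ℤ := fun l => p l * ((qs / g l : ℕ) : ℤ) with hp'_def
    have hq'mul : ∀ l, q' l * g l = q l := fun l => Nat.div_mul_cancel (hgl l)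
    have hq'1 : ∀ l, 1 ≤ q' l :=
      fun l => Nat.div_pos (Nat.le_of_dvd (hq l) (hgl l)) (hg_pos l)
    have hcop' : ∀ l, Int.gcd (p' l) (q' l) = 1 := by
      intro l
      have h1 : Nat.Coprime (p l).natAbs (q' l) := by
        have := hcop l
        have hbase : Nat.Coprime (p l).natAbs (q l) := this
        exact Nat.Coprime.coprime_dvd_right ⟨g l, (hq'mul l).symm⟩ hbase
      have h2 : Nat.Coprime (qs / g l) (q' l) :=
        (Nat.coprime_div_gcd_div_gcd (hg_pos l)).symm
      have : Nat.Coprime ((p l).natAbs * (qs / g l)) (q' l) := Nat.Coprime.mul h1 h2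
      simpa [Int.gcd, hp'_def, Int.natAbs_mul, -Int.natCast_ediv] using this
    -- q' l ∣ Q'
    have hq'dvdQ' : ∀ l, q' l ∣ Q' := by
      intro l
      have hlcm_dvd : Nat.lcm (q l) qs ∣ Q := Nat.lcm_dvd (hqdvd l) hqs_dvd
      have hEq : q' l * qs = Nat.lcm (q l) qs := by
        apply Nat.eq_of_mul_eq_mul_right (hg_pos l)
        calc q' l * qs * g l = (q' l * g l) * qs := by ring
        _ = q l * qs := by rw [hq'mul l]
        _ = Nat.gcd (q l) qs * Nat.lcm (q l) qs := (Nat.gcd_mul_lcm _ _).symm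
        _ = Nat.lcm (q l) qs * g l := by rw [hg_def]; ring
      have hdd : q' l * qs ∣ Q := hEq ▸ hlcm_dvd
      obtain ⟨m, hm⟩ := hdd
      refine ⟨m, ?_⟩
      have : Q = (q' l * m) * qs := by rw [hm]; ring
      rw [hQ'_def, this, Nat.mul_div_cancel _ hqs_pos]
    have hQ'lcm : Q' = Finset.univ.lcm q' := by
      apply Nat.dvd_antisymm
      · have hQL : Q ∣ Finset.univ.lcm q' * qs := by
          rw [hQ]
          apply Finset.lcm_dvd
          intro l _
          rw [← hq'mul l]
          exact mul_dvd_mul (Finset.dvd_lcm (Finset.mem_univ l)) (hgs l)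
        rw [hQfact] at hQL
        exact (Nat.mul_dvd_mul_iff_right hqs_pos).mp hQL
      · exact Finset.lcm_dvd (fun l _ => hq'dvdQ' l)
    have hQ'3 : 3 ≤ Q' := by
      have : 3 * qs ≤ Q' * qs := by omega
      exact Nat.le_of_mul_le_mul_right this hqs_pos
    have hQ'lt : Q' < Q := Nat.div_lt_self (by omega) hl2
    obtain ⟨r', j', hr', hj'1, hj'2, hmax', hsin'⟩ :=
      IH Q' hQ'lt hQ'3 n p' q' hq'1 hcop' hQ'lcm
    -- constants
    have hqs0R : (0:ℝ) < (qs:ℝ) := by exact_mod_cast hqs_pos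
    have hcosqs : Real.cos (2*π/(qs:ℝ)) < 1 := by
      have h1 : Real.cos (2*π/(qs:ℝ)) < Real.cos 0 := by
        apply Real.cos_lt_cos_of_nonneg_of_le_pi le_rfl
        · rw [div_le_iff₀ hqs0R]
          have : (2:ℝ) ≤ (qs:ℝ) := by exact_mod_cast hl2
          nlinarith [pi_pos]
        · positivity
      simpa using h1
    set B : ℝ := ∑ l, r' l with hB_def
    have hB : 0 ≤ B := Finset.sum_nonneg fun l _ => hr' l
    set δ : ℝ := 1 - Real.cos (2*π/(qs:ℝ)) with hδ_def
    have hδ : 0 < δ := by rw [hδ_def]; linarith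
    set A : ℝ := (2*B+1)/δ with hA_def
    have hA : 0 < A := div_pos (by linarith) hδ
    have hAδ : A * δ = 2*B+1 := div_mul_cancel₀ _ (ne_of_gt hδ)
    set r : Fin n → ℝ := fun l => (if l = lst then A else 0) + r' l with hr_def
    have hrpos : ∀ l, 0 ≤ r l := by
      intro l
      have h1 : (0:ℝ) ≤ (if l = lst then A else 0) := by
        split_ifs
        · exact hA.le
        · exact le_refl 0
      have := hr' l
      rw [hr_def]
      dsimp only
      linarith
    have split_sum : ∀ C : Fin n → ℝ,
        ∑ l, r l * C l = A * C lst + ∑ l, r' l * C l := by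
      intro C
      have h1 : ∀ l, r l * C l = (if l = lst then A * C l else 0) + r' l * C l := by
        intro l; rw [hr_def]; dsimp only; split_ifs <;> ring
      rw [Finset.sum_congr rfl fun l _ => h1 l, Finset.sum_add_distrib]
      simp
    have hangle : ∀ (s : ℕ) (l : Fin n),
        2*π*((qs*s : ℕ):ℝ)*((p l : ℤ):ℝ)/((q l : ℕ):ℝ) =
          2*π*(s:ℝ)*((p' l : ℤ):ℝ)/((q' l : ℕ):ℝ) := by
      intro s l
      have hql : ((q l : ℕ):ℝ) ≠ 0 := Nat.cast_ne_zero.mpr (by have := hq l; omega)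
      have hq'l : ((q' l : ℕ):ℝ) ≠ 0 := Nat.cast_ne_zero.mpr (by have := hq'1 l; omega)
      obtain ⟨a, ha⟩ := hgl l
      obtain ⟨b, hb⟩ := hgs l
      have ha' : q' l = a := by
        rw [hq'_def]; dsimp only; rw [ha, Nat.mul_div_cancel_left _ (hg_pos l)]
      have hb' : qs / g l = b := by rw [hb, Nat.mul_div_cancel_left _ (hg_pos l)]
      have hnat : qs * a = b * q l := by rw [ha, hb]; ring
      have hnatR : (qs:ℝ) * (a:ℝ) = (b:ℝ) * ((q l : ℕ):ℝ) := by exact_mod_cast hnat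
      have ha0 : ((a:ℕ):ℝ) ≠ 0 := by rw [← ha']; exact hq'l
      rw [hp'_def]
      dsimp only
      rw [ha', hb']
      rw [div_eq_div_iff hql ha0]
      push_cast
      linear_combination 2*π*(s:ℝ)*((p l : ℤ):ℝ) * hnatR
    have hglst : g lst = qs := by
      rw [hg_def]; dsimp only; rw [← hqs_def, Nat.gcd_self]
    have hq'lst : q' lst = 1 := by
      rw [hq'_def]; dsimp only; rw [hglst, ← hqs_def, Nat.div_self hqs_pos]
    have hcos1 : ∀ s : ℕ,
        Real.cos (2*π*(s:ℝ)*((p' lst : ℤ):ℝ)/((q' lst : ℕ):ℝ)) = 1 := by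
      intro s
      rw [hq'lst]
      have he : 2*π*(s:ℝ)*((p' lst : ℤ):ℝ)/((1:ℕ):ℝ) = (((s:ℤ) * p' lst : ℤ):ℝ) * (2*π) := by
        push_cast; ring
      rw [he, Real.cos_int_mul_two_pi]
    have hsin0 : ∀ s : ℕ,
        Real.sin (2*π*(s:ℝ)*((p' lst : ℤ):ℝ)/((q' lst : ℕ):ℝ)) = 0 := by
      intro s
      rw [hq'lst]
      have he : 2*π*(s:ℝ)*((p' lst : ℤ):ℝ)/((1:ℕ):ℝ) = 0 + (((s:ℤ) * p' lst : ℤ):ℝ) * (2*π) := by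
        push_cast; ring
      rw [he, Real.sin_add_int_mul_two_pi, Real.sin_zero]
    have hsum : ∀ s : ℕ,
        ∑ l, r l * Real.cos (2*π*((qs*s : ℕ):ℝ)*((p l : ℤ):ℝ)/((q l : ℕ):ℝ)) =
          A + ∑ l, r' l * Real.cos (2*π*(s:ℝ)*((p' l : ℤ):ℝ)/((q' l : ℕ):ℝ)) := by
      intro s
      rw [split_sum]
      congr 1
      · rw [hangle s lst, hcos1 s, mul_one]
      · apply Finset.sum_congr rfl
        intro l _
        rw [hangle s l]
    have hsum_sin :
        ∑ l, r l * Real.sin (2*π*((qs*j' : ℕ):ℝ)*((p l : ℤ):ℝ)/((q l : ℕ):ℝ)) =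
          ∑ l, r' l * Real.sin (2*π*(j':ℝ)*((p' l : ℤ):ℝ)/((q' l : ℕ):ℝ)) := by
      rw [split_sum]
      have h0 : A * Real.sin (2*π*((qs*j' : ℕ):ℝ)*((p lst : ℤ):ℝ)/((q lst : ℕ):ℝ)) = 0 := by
        rw [hangle j' lst, hsin0 j', mul_zero]
      rw [h0, zero_add]
      apply Finset.sum_congr rfl
      intro l _
      rw [hangle j' l]
    refine ⟨r, qs * j', hrpos, ?_, ?_, ?_, ?_⟩
    · have := Nat.mul_pos hqs_pos (show 0 < j' by omega)
      omega
    · have hlt : qs * j' < qs * Q' := by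
        exact mul_lt_mul_of_pos_left (show j' < Q' by omega) hqs_pos
      have h2 : qs * Q' = Q := by rw [hQfact]; ring
      omega
    · intro k hk1 hk2 hkj hkQj
      by_cases hdvd : qs ∣ k
      · obtain ⟨s, hs⟩ := hdvd
        have hs1 : 1 ≤ s := by
          rcases Nat.eq_zero_or_pos s with h | h
          · exfalso; rw [h, Nat.mul_zero] at hs; omega
          · exact h
        have hsQ' : s < Q' := by
          by_contra hcon
          push_neg at hcon
          have h1 : qs * Q' ≤ qs * s := Nat.mul_le_mul_left _ hcon
          have h2 : qs * Q' = Q := by rw [hQfact]; ring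
          omega
        have hsj' : s ≠ j' := fun h => hkj (by rw [hs, h])
        have hsQj' : s ≠ Q' - j' := by
          intro h
          apply hkQj
          have hsum_eq : s + j' = Q' := by omega
          have hkk : k + qs * j' = Q := by
            rw [hs, ← Nat.mul_add, hsum_eq, hQfact]; ring
          omega
        subst hs
        rw [hsum s, hsum j']
        have := hmax' s hs1 (by omega) hsj' hsQj'
        linarith
      · haveI : NeZero qs := ⟨by omega⟩
        have hcopPs : Int.gcd ps qs = 1 := hcop lst
        set c : ℕ := ((k : ZMod qs) * ((ps : ℤ) : ZMod qs)).val with hc_def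
        have hcqs : c < qs := ZMod.val_lt _
        have hccast : ((c:ℕ) : ZMod qs) = (k : ZMod qs) * ((ps : ℤ) : ZMod qs) := by
          rw [hc_def]; simp [ZMod.natCast_val, ZMod.cast_id]
        have hkc : ((qs:ℤ)) ∣ ((k:ℤ) * ps - (c:ℤ)) := by
          rw [← ZMod.intCast_zmod_eq_zero_iff_dvd]
          push_cast
          rw [hccast]
          push_cast
          ring
        have hc0 : c ≠ 0 := by
          intro h0
          have hdd : (qs:ℤ) ∣ (k:ℤ) * ps := by
            have h := hkc; rw [h0] at h; simpa using h
          have hco : IsCoprime ((qs:ℕ):ℤ) ps :=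
            (Int.isCoprime_iff_gcd_eq_one.mpr hcopPs).symm
          have : ((qs:ℕ):ℤ) ∣ (k:ℤ) := hco.dvd_of_dvd_mul_right hdd
          exact hdvd (Int.ofNat_dvd.mp this)
        have hkcos : Real.cos (2*π*(k:ℝ)*((ps : ℤ):ℝ)/((qs:ℕ):ℝ)) ≤ 1 - δ := by
          have e1 : 2*π*(k:ℝ)*((ps:ℤ):ℝ)/((qs:ℕ):ℝ) =
              2*π*((((k:ℤ)*ps) : ℤ):ℝ)/((qs:ℕ):ℝ) := by push_cast; ring
          have e2 : Real.cos (2*π*((((k:ℤ)*ps) : ℤ):ℝ)/((qs:ℕ):ℝ)) =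
              Real.cos (2*π*(c:ℝ)/((qs:ℕ):ℝ)) := by
            have := cos_congr_mod qs (by omega) ((k:ℤ)*ps) (c:ℤ) hkc
            convert this using 3 <;> norm_cast
          rw [e1, e2, hδ_def]
          have := cos_angle_le qs c (by omega) (by omega)
          linarith
        rw [hsum j', split_sum]
        have hS'up : ∑ l, r' l * Real.cos (2*π*(k:ℝ)*((p l : ℤ):ℝ)/((q l : ℕ):ℝ)) ≤ B := by
          rw [hB_def]
          apply Finset.sum_le_sum
          intro l _
          nlinarith [Real.cos_le_one (2*π*(k:ℝ)*((p l : ℤ):ℝ)/((q l : ℕ):ℝ)), hr' l]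
        have hS'lo : -B ≤ ∑ l, r' l * Real.cos (2*π*(j':ℝ)*((p' l : ℤ):ℝ)/((q' l : ℕ):ℝ)) := by
          have h : ∀ l ∈ (Finset.univ : Finset (Fin n)),
              -(r' l) ≤ r' l * Real.cos (2*π*(j':ℝ)*((p' l : ℤ):ℝ)/((q' l : ℕ):ℝ)) := by
            intro l _
            nlinarith [Real.neg_one_le_cos (2*π*(j':ℝ)*((p' l : ℤ):ℝ)/((q' l : ℕ):ℝ)), hr' l]
          have h2 := Finset.sum_le_sum h
          rw [Finset.sum_neg_distrib] at h2
          rw [hB_def]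
          linarith
        have hAc : A * Real.cos (2*π*(k:ℝ)*((ps : ℤ):ℝ)/((qs:ℕ):ℝ)) ≤ A * (1 - δ) :=
          mul_le_mul_of_nonneg_left hkcos hA.le
        calc A * Real.cos (2*π*(k:ℝ)*((p lst : ℤ):ℝ)/((q lst : ℕ):ℝ)) +
              ∑ l, r' l * Real.cos (2*π*(k:ℝ)*((p l : ℤ):ℝ)/((q l : ℕ):ℝ))
            ≤ A * (1-δ) + B := by
              have : (p lst : ℝ) = ((ps:ℤ):ℝ) := by rw [hps_def]
              have hq2 : ((q lst : ℕ):ℝ) = ((qs:ℕ):ℝ) := by rw [hqs_def]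
              rw [this, hq2]
              linarith [hAc, hS'up]
        _ < A - B := by
              have hexp : A*(1-δ) = A - A*δ := by ring
              linarith [hAδ, hexp]
        _ ≤ A + (∑ l, r' l * Real.cos (2*π*(j':ℝ)*((p' l : ℤ):ℝ)/((q' l : ℕ):ℝ))) := by
              linarith [hS'lo]
    · rw [hsum_sin]
      exact hsin'

/-- Lemma 6.2 of the paper: given coprime pairs `(p l, q l)` with
`q = lcm (q 1, …, q n) ≥ 3`, there are nonnegative weights `r l` and an index
`1 ≤ j ≤ q - 1` at which the weighted cosine sum is strictly maximal among
`k ∈ {1,…,q-1} \ {j, q-j}`, with nonvanishing weighted sine sum. -/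
theorem stmt0 (n : ℕ) (hn : 1 ≤ n) (p : Fin n → ℤ) (q : Fin n → ℕ)
    (hq : ∀ l, 1 ≤ q l) (hcop : ∀ l, Int.gcd (p l) (q l) = 1)
    (Q : ℕ) (hQ : Q = Finset.univ.lcm q) (hQ3 : 3 ≤ Q) :
    ∃ (r : Fin n → ℝ) (j : ℕ),
      (∀ l, 0 ≤ r l) ∧ 1 ≤ j ∧ j ≤ Q - 1 ∧
      (∀ k : ℕ, 1 ≤ k → k ≤ Q - 1 → k ≠ j → k ≠ Q - j →
        ∑ l, r l * Real.cos (2 * π * k * p l / q l) <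
          ∑ l, r l * Real.cos (2 * π * j * p l / q l)) ∧
      ∑ l, r l * Real.sin (2 * π * j * p l / q l) ≠ 0 :=
  main Q hQ3 n p q hq hcop hQ
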